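/- Let p, q : ℝⁿ → (0,∞) and s : ℝⁿ → ℝ be log-Hölder continuous with 0 < p⁻ ≤ p⁺ < ∞, 0 < q⁻ ≤ q⁺ < ∞. Assume p, q, s are independent of the n-th coordinate for |x_n| ≤ 2. For ν ∈ ℕ₀ and m' ∈ ℤ^{n−1}, let Q̃_{ν,m'} = Q_{ν,m'} × [2^{−ν}, 2^{−ν+1}) ⊂ ℝⁿ. Then for every λ > 0 and every family of complex coefficients (λ_{ν,(m',0)}): ∑_{ν∈ℕ₀} ‖ (2^{ν(s̃(·)−1/p̃(·))} ∑_{m'} λ_{ν,(m',0)} χ_{ν,m'} / λ)^{q̃(·)} ‖_{L^{p̃(·)/q̃(·)}(ℝ^{n−1})} equals ∑_{ν∈ℕ₀} ‖ (2^{νs(·)} ∑_{m'} λ_{ν,(m',0)} χ_{Q̃_{ν,m'}} / λ)^{q(·)} ‖_{L^{p(·)/q(·)}(ℝⁿ)}, where p̃(x') = p(x',0), q̃(x') = q(x',0), s̃(x') = s(x',0). Consequently the ℓ^{q̃(·)}(L^{p̃(·)})-norm over ℝ^{n−1} of the level-(ν) weighted indicator sums equals the ℓ^{q(·)}(L^{p(·)})-norm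 over ℝⁿ of the corresponding sums with indicators of the boxes Q̃_{ν,m'}. -/

import Mathlib

open MeasureTheory

/-- Luxemburg quasi-norm for real-valued functions on a measure space. -/
noncomputable def luxNormR {X : Type*} [MeasureSpace X] (p : X → ℝ) (f : X → ℝ) : ℝ :=
  sInf {l : ℝ | 0 < l ∧ (∫ x : X, (|f x| / l) ^ (p x)) ≤ 1}

/-- Membership in the dyadic cube `Q_{ν,m'} ⊆ ℝ^{n−1}`. -/
def QcMem {k : ℕ} (ν : ℕ) (m' : Fin k → ℤ) (x' : EuclideanSpace ℝ (Fin k)) : Prop :=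
  ∀ i, (2 : ℝ) ^ (-(ν : ℤ)) * (m' i : ℝ) ≤ x' i ∧
    x' i < (2 : ℝ) ^ (-(ν : ℤ)) * ((m' i : ℝ) + 1)

/-- `∑_{m'} λ_{ν,(m',0)} χ_{ν,m'}(x')`. -/
noncomputable def indicSum {k : ℕ} (lamc : ℕ → (Fin k → ℤ) → ℂ) (ν : ℕ)
    (x' : EuclideanSpace ℝ (Fin k)) : ℂ :=
  ∑' m' : Fin k → ℤ, Set.indicator {y | QcMem ν m' y} (fun _ => lamc ν m') x'

/-- `∑_{m'} λ_{ν,(m',0)} χ_{Q̃_{ν,m'}}(x)`, with `Q̃_{ν,m'} = Q_{ν,m'} × [2^{−ν}, 2^{−ν+1})`. -/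
noncomputable def indicSumBox {k : ℕ} (lamc : ℕ → (Fin k → ℤ) → ℂ) (ν : ℕ)
    (x : EuclideanSpace ℝ (Fin k) × ℝ) : ℂ :=
  ∑' m' : Fin k → ℤ, Set.indicator
    {y : EuclideanSpace ℝ (Fin k) × ℝ | QcMem ν m' y.1 ∧
      y.2 ∈ Set.Ico ((2 : ℝ) ^ (-(ν : ℤ))) ((2 : ℝ) ^ (-(ν : ℤ) + 1))}
    (fun _ => lamc ν m') x


namespace TraceAux

open Set

variable {k : ℕ}

/-- The unique dyadic index of `x'` at level `ν`. -/
noncomputable def fl (ν : ℕ) (x' : EuclideanSpace ℝ (Fin k)) : Fin k → ℤ :=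
  fun i => ⌊(2 : ℝ) ^ (ν : ℤ) * x' i⌋

lemma qcMem_iff (ν : ℕ) (m' : Fin k → ℤ) (x' : EuclideanSpace ℝ (Fin k)) :
    QcMem ν m' x' ↔ m' = fl ν x' := by
  have hc : (0 : ℝ) < (2 : ℝ) ^ (ν : ℤ) := by positivity
  have hinv : (2 : ℝ) ^ (-(ν : ℤ)) = ((2 : ℝ) ^ (ν : ℤ))⁻¹ := zpow_neg 2 _
  unfold QcMem fl
  rw [funext_iff]
  refine forall_congr' fun i => ?_
  rw [eq_comm, Int.floor_eq_iff]
  constructor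
  · rintro ⟨h1, h2⟩
    rw [hinv] at h1 h2
    constructor
    · have := mul_le_mul_of_nonneg_left h1 hc.le
      rwa [← mul_assoc, mul_inv_cancel₀ hc.ne', one_mul] at this
    · have := mul_lt_mul_of_pos_left h2 hc
      rwa [← mul_assoc, mul_inv_cancel₀ hc.ne', one_mul] at this
  · rintro ⟨h1, h2⟩
    rw [hinv]
    constructor
    · have := mul_le_mul_of_nonneg_left h1 (inv_nonneg.mpr hc.le)
      rwa [← mul_assoc, inv_mul_cancel₀ hc.ne', one_mul] at this
    · have := mul_lt_mul_of_pos_left h2 (inv_pos.mpr hc)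
      rwa [← mul_assoc, inv_mul_cancel₀ hc.ne', one_mul] at this

lemma qcMem_fl (ν : ℕ) (x' : EuclideanSpace ℝ (Fin k)) : QcMem ν (fl ν x') x' :=
  (qcMem_iff ν _ x').mpr rfl

lemma indicSum_eq (lamc : ℕ → (Fin k → ℤ) → ℂ) (ν : ℕ) (x' : EuclideanSpace ℝ (Fin k)) :
    indicSum lamc ν x' = lamc ν (fl ν x') := by
  unfold indicSum
  rw [tsum_eq_single (fl ν x')]
  · exact Set.indicator_of_mem (qcMem_fl ν x') _
  · intro m' hm'
    exact Set.indicator_of_notMem (fun h => hm' ((qcMem_iff ν m' x').mp h)) _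

lemma indicSumBox_eq (lamc : ℕ → (Fin k → ℤ) → ℂ) (ν : ℕ)
    (x : EuclideanSpace ℝ (Fin k) × ℝ) :
    indicSumBox lamc ν x =
      if x.2 ∈ Set.Ico ((2 : ℝ) ^ (-(ν : ℤ))) ((2 : ℝ) ^ (-(ν : ℤ) + 1)) then
        lamc ν (fl ν x.1) else 0 := by
  unfold indicSumBox
  rw [tsum_eq_single (fl ν x.1)]
  · by_cases h : x.2 ∈ Set.Ico ((2 : ℝ) ^ (-(ν : ℤ))) ((2 : ℝ) ^ (-(ν : ℤ) + 1))
    · have hx : x ∈ {y : EuclideanSpace ℝ (Fin k) × ℝ | QcMem ν (fl ν x.1) y.1 ∧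
          y.2 ∈ Set.Ico ((2 : ℝ) ^ (-(ν : ℤ))) ((2 : ℝ) ^ (-(ν : ℤ) + 1))} :=
        ⟨qcMem_fl ν x.1, h⟩
      rw [Set.indicator_of_mem hx, if_pos h]
    · rw [Set.indicator_of_notMem (fun hh => h hh.2), if_neg h]
  · intro m' hm'
    exact Set.indicator_of_notMem (fun hh => hm' ((qcMem_iff ν m' x.1).mp hh.1)) _

lemma abs_le_two_of_mem (ν : ℕ) {t : ℝ}
    (ht : t ∈ Set.Ico ((2 : ℝ) ^ (-(ν : ℤ))) ((2 : ℝ) ^ (-(ν : ℤ) + 1))) : |t| ≤ 2 := by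
  obtain ⟨h1, h2⟩ := ht
  have h0 : (0 : ℝ) < (2 : ℝ) ^ (-(ν : ℤ)) := by positivity
  have hle1 : (2 : ℝ) ^ (-(ν : ℤ)) ≤ 1 :=
    zpow_le_one_of_nonpos₀ (by norm_num) (by omega)
  have hub : (2 : ℝ) ^ (-(ν : ℤ) + 1) ≤ 2 := by
    rw [zpow_add_one₀ (by norm_num : (2 : ℝ) ≠ 0)]
    nlinarith
  rw [abs_of_pos (lt_of_lt_of_le h0 h1)]
  linarith

lemma measurable_fl (ν : ℕ) : Measurable (fl (k := k) ν) :=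
  measurable_pi_lambda _ fun i => (((measurable_pi_apply i).comp (WithLp.measurable_ofLp 2 (Fin k → ℝ))).const_mul _).floor

lemma measurable_rpow_of_nonneg {α : Type*} [MeasurableSpace α] {h e : α → ℝ}
    (hh : Measurable h) (he : Measurable e) (h0 : ∀ x, 0 ≤ h x) (he0 : ∀ x, 0 < e x) :
    Measurable fun x => h x ^ e x := by
  have heq : (fun x => h x ^ e x) =
      fun x => if h x = 0 then 0 else Real.exp (Real.log (h x) * e x) := by
    ext x
    split_ifs with hx
    · rw [hx, Real.zero_rpow (he0 x).ne']
    · rw [Real.rpow_def_of_pos (lt_of_le_of_ne (h0 x) (Ne.symm hx))]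
  rw [heq]
  exact Measurable.ite (hh (measurableSet_singleton 0)) measurable_const
    ((hh.log.mul he).exp)

lemma measurable_const_rpow {α : Type*} [MeasurableSpace α] {e : α → ℝ}
    (he : Measurable e) : Measurable fun x => (2 : ℝ) ^ e x := by
  have heq : (fun x => (2 : ℝ) ^ e x) = fun x => Real.exp (Real.log 2 * e x) := by
    ext x; exact Real.rpow_def_of_pos (by norm_num) _
  rw [heq]
  exact ((measurable_const.mul he).exp)

lemma key_alg (ν : ℕ) (a lam l pp qq ss : ℝ) (ha : 0 ≤ a) (hlam : 0 < lam) (hl : 0 < l)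
    (hpp : 0 < pp) (hqq : 0 < qq) :
    (((2 : ℝ) ^ ((ν : ℝ) * ss) * a / lam) ^ qq / l) ^ (pp / qq) * (2 : ℝ) ^ (-(ν : ℤ))
      = (((2 : ℝ) ^ ((ν : ℝ) * (ss - 1 / pp)) * a / lam) ^ qq / l) ^ (pp / qq) := by
  have h2 : (0 : ℝ) ≤ 2 := by norm_num
  have hb1 : (0 : ℝ) ≤ (2 : ℝ) ^ ((ν : ℝ) * ss) * a / lam := by positivity
  have hb2 : (0 : ℝ) ≤ (2 : ℝ) ^ ((ν : ℝ) * (ss - 1 / pp)) * a / lam := by positivity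
  have hmono : qq * (pp / qq) = pp := by field_simp
  rw [Real.div_rpow (Real.rpow_nonneg hb1 qq) hl.le _,
      Real.div_rpow (Real.rpow_nonneg hb2 qq) hl.le _,
      ← Real.rpow_mul hb1, ← Real.rpow_mul hb2, hmono, div_mul_eq_mul_div]
  congr 1
  have e1 : ((2 : ℝ) ^ ((ν : ℝ) * ss) * a / lam) ^ pp
      = (2 : ℝ) ^ ((ν : ℝ) * ss * pp) * (a / lam) ^ pp := by
    rw [mul_div_assoc, Real.mul_rpow (Real.rpow_nonneg h2 _) (by positivity),
      ← Real.rpow_mul h2]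
  have e2 : ((2 : ℝ) ^ ((ν : ℝ) * (ss - 1 / pp)) * a / lam) ^ pp
      = (2 : ℝ) ^ ((ν : ℝ) * (ss - 1 / pp) * pp) * (a / lam) ^ pp := by
    rw [mul_div_assoc, Real.mul_rpow (Real.rpow_nonneg h2 _) (by positivity),
      ← Real.rpow_mul h2]
  have e3 : (ν : ℝ) * (ss - 1 / pp) * pp = (ν : ℝ) * ss * pp + (-(ν : ℝ)) := by
    field_simp; ring
  have e4 : (2 : ℝ) ^ (-(ν : ℤ)) = (2 : ℝ) ^ (-(ν : ℝ)) := by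
    rw [← Real.rpow_intCast 2 (-(ν : ℤ))]
    norm_num
  rw [e1, e2, e3, Real.rpow_add (by norm_num : (0 : ℝ) < 2), e4]
  ring

lemma modular_eq {k : ℕ}
    (p q s : EuclideanSpace ℝ (Fin k) × ℝ → ℝ)
    (hp : Measurable p) (hq : Measurable q) (hs : Measurable s)
    (hppos : ∀ x, 0 < p x) (hqpos : ∀ x, 0 < q x)
    (hindep : ∀ (x' : EuclideanSpace ℝ (Fin k)) (t : ℝ), |t| ≤ 2 →
      p (x', t) = p (x', 0) ∧ q (x', t) = q (x', 0) ∧ s (x', t) = s (x', 0))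
    (lamc : ℕ → (Fin k → ℤ) → ℂ) (ν : ℕ) (lam l : ℝ) (hlam : 0 < lam) (hl : 0 < l) :
    (∫ x' : EuclideanSpace ℝ (Fin k),
      (|((2 : ℝ) ^ ((ν : ℝ) * (s (x', 0) - 1 / p (x', 0))) *
          ‖indicSum lamc ν x'‖ / lam) ^ (q (x', 0))| / l) ^
        (p (x', 0) / q (x', 0)))
    = (∫ x : EuclideanSpace ℝ (Fin k) × ℝ,
      (|((2 : ℝ) ^ ((ν : ℝ) * s x) *
          ‖indicSumBox lamc ν x‖ / lam) ^ (q x)| / l) ^ (p x / q x)) := by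
  classical
  set a : EuclideanSpace ℝ (Fin k) → ℝ := fun x' => ‖lamc ν (fl ν x')‖ with ha_def
  have ha0 : ∀ x', 0 ≤ a x' := fun x' => norm_nonneg _
  set I : Set ℝ := Set.Ico ((2 : ℝ) ^ (-(ν : ℤ))) ((2 : ℝ) ^ (-(ν : ℤ) + 1)) with hI_def
  set g1 : EuclideanSpace ℝ (Fin k) → ℝ := fun x' =>
    (((2 : ℝ) ^ ((ν : ℝ) * (s (x', 0) - 1 / p (x', 0))) * a x' / lam) ^ (q (x', 0)) / l) ^
      (p (x', 0) / q (x', 0)) with hg1_def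
  set c : EuclideanSpace ℝ (Fin k) → ℝ := fun x' =>
    (((2 : ℝ) ^ ((ν : ℝ) * s (x', 0)) * a x' / lam) ^ (q (x', 0)) / l) ^
      (p (x', 0) / q (x', 0)) with hc_def
  set g2 : EuclideanSpace ℝ (Fin k) × ℝ → ℝ :=
    Set.indicator {x : EuclideanSpace ℝ (Fin k) × ℝ | x.2 ∈ I} (fun x => c x.1) with hg2_def
  -- pointwise identification of the two integrands
  have hA : ∀ x' : EuclideanSpace ℝ (Fin k),
      (|((2 : ℝ) ^ ((ν : ℝ) * (s (x', 0) - 1 / p (x', 0))) *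
          ‖indicSum lamc ν x'‖ / lam) ^ (q (x', 0))| / l) ^
        (p (x', 0) / q (x', 0)) = g1 x' := by
    intro x'
    rw [indicSum_eq, abs_of_nonneg (Real.rpow_nonneg (by positivity) _)]
  have hB : ∀ x : EuclideanSpace ℝ (Fin k) × ℝ,
      (|((2 : ℝ) ^ ((ν : ℝ) * s x) *
          ‖indicSumBox lamc ν x‖ / lam) ^ (q x)| / l) ^ (p x / q x) = g2 x := by
    rintro ⟨x', t⟩
    rw [indicSumBox_eq]
    by_cases ht : t ∈ I
    · rw [if_pos ht]
      obtain ⟨hP, hQ, hS⟩ := hindep x' t (abs_le_two_of_mem ν ht)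
      rw [hg2_def, Set.indicator_of_mem (show ((x', t) : _ × ℝ) ∈ _ from ht), hP, hQ, hS,
        abs_of_nonneg (Real.rpow_nonneg (by positivity) _)]
    · rw [if_neg ht, hg2_def, Set.indicator_of_notMem (show ¬((x', t) : _ × ℝ) ∈ _ from ht)]
      simp only [map_zero, norm_zero, mul_zero, zero_div, Real.zero_rpow (hqpos (x', t)).ne', abs_zero,
        Real.zero_rpow (ne_of_gt (div_pos (hppos (x', t)) (hqpos (x', t))))]
  -- measurability
  have hpt : Measurable fun x' : EuclideanSpace ℝ (Fin k) => p (x', 0) :=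
    hp.comp (measurable_id.prodMk measurable_const)
  have hqt : Measurable fun x' : EuclideanSpace ℝ (Fin k) => q (x', 0) :=
    hq.comp (measurable_id.prodMk measurable_const)
  have hst : Measurable fun x' : EuclideanSpace ℝ (Fin k) => s (x', 0) :=
    hs.comp (measurable_id.prodMk measurable_const)
  have hma : Measurable a :=
    continuous_norm.measurable.comp
      ((measurable_of_countable (lamc ν)).comp (measurable_fl ν))
  have hmg1 : Measurable g1 := by
    apply measurable_rpow_of_nonneg _ (hpt.div hqt)
    · intro x'; positivity
    · intro x'; exact div_pos (hppos _) (hqpos _)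
    · refine Measurable.div_const ?_ l
      refine measurable_rpow_of_nonneg ?_ hqt (fun x' => by positivity) (fun x' => hqpos _)
      exact ((measurable_const_rpow ((measurable_const.mul (hst.sub
        (measurable_const.div hpt))))).mul hma).div_const lam
  have hmc : Measurable c := by
    apply measurable_rpow_of_nonneg _ (hpt.div hqt)
    · intro x'; positivity
    · intro x'; exact div_pos (hppos _) (hqpos _)
    · refine Measurable.div_const ?_ l
      refine measurable_rpow_of_nonneg ?_ hqt (fun x' => by positivity) (fun x' => hqpos _)
      exact ((measurable_const_rpow (measurable_const.mul hst)).mul hma).div_const lam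
  have hmg2 : Measurable g2 := by
    refine (hmc.comp measurable_fst).indicator ?_
    exact measurable_snd measurableSet_Ico
  have hc0 : ∀ x', 0 ≤ c x' := fun x' => Real.rpow_nonneg (by positivity) _
  have hg10 : ∀ x', 0 ≤ g1 x' := fun x' => Real.rpow_nonneg (by positivity) _
  have hg20 : ∀ x, 0 ≤ g2 x := fun x => Set.indicator_nonneg (fun y _ => hc0 y.1) x
  -- the two lintegrals coincide
  have hlin : (∫⁻ x : EuclideanSpace ℝ (Fin k) × ℝ, ENNReal.ofReal (g2 x))
      = ∫⁻ x' : EuclideanSpace ℝ (Fin k), ENNReal.ofReal (g1 x') := by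
    rw [MeasureTheory.Measure.volume_eq_prod,
      MeasureTheory.lintegral_prod _ (hmg2.ennreal_ofReal.aemeasurable)]
    refine lintegral_congr fun x' => ?_
    have hpt2 : ∀ t : ℝ, ENNReal.ofReal (g2 (x', t))
        = Set.indicator I (fun _ => ENNReal.ofReal (c x')) t := by
      intro t
      by_cases ht : t ∈ I
      · rw [Set.indicator_of_mem ht, hg2_def,
          Set.indicator_of_mem (show ((x', t) : _ × ℝ) ∈ _ from ht)]
      · rw [Set.indicator_of_notMem ht, hg2_def,
          Set.indicator_of_notMem (show ¬((x', t) : _ × ℝ) ∈ _ from ht), ENNReal.ofReal_zero]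
    simp only [hpt2]
    rw [lintegral_indicator measurableSet_Ico, setLIntegral_const, Real.volume_Ico]
    have hvol : (2 : ℝ) ^ (-(ν : ℤ) + 1) - (2 : ℝ) ^ (-(ν : ℤ)) = (2 : ℝ) ^ (-(ν : ℤ)) := by
      rw [zpow_add_one₀ (by norm_num : (2 : ℝ) ≠ 0)]; ring
    rw [hvol, ← ENNReal.ofReal_mul (hc0 x')]
    congr 1
    exact key_alg ν (a x') lam l (p (x', 0)) (q (x', 0)) (s (x', 0)) (ha0 x') hlam hl
      (hppos _) (hqpos _)
  calc (∫ x' : EuclideanSpace ℝ (Fin k),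
      (|((2 : ℝ) ^ ((ν : ℝ) * (s (x', 0) - 1 / p (x', 0))) *
          ‖indicSum lamc ν x'‖ / lam) ^ (q (x', 0))| / l) ^
        (p (x', 0) / q (x', 0)))
      = ∫ x', g1 x' := by
        exact integral_congr_ae (Filter.Eventually.of_forall hA)
    _ = (∫⁻ x', ENNReal.ofReal (g1 x')).toReal :=
        integral_eq_lintegral_of_nonneg_ae (Filter.Eventually.of_forall hg10)
          hmg1.aestronglyMeasurable
    _ = (∫⁻ x : EuclideanSpace ℝ (Fin k) × ℝ, ENNReal.ofReal (g2 x)).toReal := by rw [hlin]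
    _ = ∫ x, g2 x :=
        (integral_eq_lintegral_of_nonneg_ae (Filter.Eventually.of_forall hg20)
          hmg2.aestronglyMeasurable).symm
    _ = _ := (integral_congr_ae (Filter.Eventually.of_forall hB)).symm

end TraceAux

/-- Modular identity for the trace theorem: if `p, q, s` are log-Hölder continuous, with
`0 < p⁻ ≤ p⁺ < ∞`, `0 < q⁻ ≤ q⁺ < ∞`, and independent of the last coordinate for
`|x_n| ≤ 2`, then for every `λ > 0` the `ℓ^{q̃(·)}(L^{p̃(·)})`-modular over `ℝ^{n−1}` of the
weighted indicator sums (with weight `2^{ν(s̃−1/p̃)}`) equals the `ℓ^{q(·)}(L^{p(·)})`-modular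
over `ℝⁿ` of the corresponding sums over the boxes `Q̃_{ν,m'}`; consequently the two
Luxemburg-type sequence norms agree. -/
theorem trace_modular_identity {k : ℕ}
    (p q : EuclideanSpace ℝ (Fin k) × ℝ → ℝ)
    (s : EuclideanSpace ℝ (Fin k) × ℝ → ℝ)
    (hp : Measurable p) (hq : Measurable q) (hs : Measurable s)
    (hppos : ∀ x, 0 < p x) (hqpos : ∀ x, 0 < q x)
    (hpsup : ∃ C : ℝ, ∀ x, p x ≤ C) (hqsup : ∃ C : ℝ, ∀ x, q x ≤ C)
    (hpC : ∃ C : ℝ, 0 < C ∧ ∀ x y, x ≠ y →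
      |p x - p y| ≤ C / Real.log (Real.exp 1 + ‖x - y‖⁻¹))
    (hqC : ∃ C : ℝ, 0 < C ∧ ∀ x y, x ≠ y →
      |q x - q y| ≤ C / Real.log (Real.exp 1 + ‖x - y‖⁻¹))
    (hsC : ∃ C : ℝ, 0 < C ∧ ∀ x y, x ≠ y →
      |s x - s y| ≤ C / Real.log (Real.exp 1 + ‖x - y‖⁻¹))
    (hindep : ∀ (x' : EuclideanSpace ℝ (Fin k)) (t : ℝ), |t| ≤ 2 →
      p (x', t) = p (x', 0) ∧ q (x', t) = q (x', 0) ∧ s (x', t) = s (x', 0))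
    (lamc : ℕ → (Fin k → ℤ) → ℂ) :
    (∀ lam : ℝ, 0 < lam →
      (∑' ν : ℕ, luxNormR (fun x' => p (x', 0) / q (x', 0))
        (fun x' => ((2 : ℝ) ^ ((ν : ℝ) * (s (x', 0) - 1 / p (x', 0))) *
          ‖indicSum lamc ν x'‖ / lam) ^ (q (x', 0)))) =
      (∑' ν : ℕ, luxNormR (fun x => p x / q x)
        (fun x => ((2 : ℝ) ^ ((ν : ℝ) * s x) *
          ‖indicSumBox lamc ν x‖ / lam) ^ (q x)))) ∧
    sInf {lam : ℝ | 0 < lam ∧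
      (∑' ν : ℕ, luxNormR (fun x' => p (x', 0) / q (x', 0))
        (fun x' => ((2 : ℝ) ^ ((ν : ℝ) * (s (x', 0) - 1 / p (x', 0))) *
          ‖indicSum lamc ν x'‖ / lam) ^ (q (x', 0)))) ≤ 1} =
    sInf {lam : ℝ | 0 < lam ∧
      (∑' ν : ℕ, luxNormR (fun x => p x / q x)
        (fun x => ((2 : ℝ) ^ ((ν : ℝ) * s x) *
          ‖indicSumBox lamc ν x‖ / lam) ^ (q x))) ≤ 1} := by
  classical
  have main : ∀ lam : ℝ, 0 < lam →
      (∑' ν : ℕ, luxNormR (fun x' => p (x', 0) / q (x', 0))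
        (fun x' => ((2 : ℝ) ^ ((ν : ℝ) * (s (x', 0) - 1 / p (x', 0))) *
          ‖indicSum lamc ν x'‖ / lam) ^ (q (x', 0)))) =
      (∑' ν : ℕ, luxNormR (fun x => p x / q x)
        (fun x => ((2 : ℝ) ^ ((ν : ℝ) * s x) *
          ‖indicSumBox lamc ν x‖ / lam) ^ (q x))) := by
    intro lam hlam
    refine tsum_congr fun ν => ?_
    unfold luxNormR
    congr 1
    ext l
    simp only [Set.mem_setOf_eq]
    refine and_congr_right fun hl => ?_
    rw [TraceAux.modular_eq p q s hp hq hs hppos hqpos hindep lamc ν lam l hlam hl]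
  refine ⟨main, ?_⟩
  congr 1
  ext lam
  simp only [Set.mem_setOf_eq]
  exact and_congr_right fun hlam => by rw [main lam hlam]
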